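/- For every product prior p with classwise lower bound α, every record index i ∈ Fin n, every class r ∈ Fin k, and every output y ∈ ℝ^m, the conditional output density satisfies f_{Y|D_i=r}(y) · (∑_j p i j · exp(−Δ_{j,r})) ≤ f_Y(y), where Δ_{j,j'} := (∑_l |w_{l,j} − w_{l,j'}|)/b; i.e., the density ratio f_{Y|D_i=r}(y)/f_Y(y) is at most (∑_j p i j exp(−‖w_{:,j} − w_{:,r}‖_1/b))^{-1}. -/

import Mathlib

open Finset Real

noncomputable section

/-- Scaled ℓ1 column distance `Δ_{j,j'} := (∑_l |w_{l,j} − w_{l,j'}|)/b`. -/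
def Δcol {m k : ℕ} (W : Fin m → Fin k → ℝ) (b : ℝ) (j j' : Fin k) : ℝ :=
  (∑ l, |W l j - W l j'|) / b

/-- Linear-query answer `q(x)_l := ∑_i w_{l, x i}`. -/
def linQuery {n m k : ℕ} (W : Fin m → Fin k → ℝ) (x : Fin n → Fin k) (l : Fin m) : ℝ :=
  ∑ i, W l (x i)

/-- Laplace-mechanism output density given database `x`. -/
def lapDensity {n m k : ℕ} (W : Fin m → Fin k → ℝ) (b : ℝ) (x : Fin n → Fin k)
    (y : Fin m → ℝ) : ℝ :=
  ∏ l, (1 / (2 * b)) * Real.exp (-|y l - linQuery W x l| / b)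

/-- Output marginal density `f_Y(y) = ∑_x P(x) g(x,y)` for product prior `p`. -/
def fY {n m k : ℕ} (W : Fin m → Fin k → ℝ) (b : ℝ) (p : Fin n → Fin k → ℝ)
    (y : Fin m → ℝ) : ℝ :=
  ∑ x : Fin n → Fin k, (∏ i, p i (x i)) * lapDensity W b x y

/-- Conditional output density given that record `i` equals class `r`. -/
def fCond {n m k : ℕ} (W : Fin m → Fin k → ℝ) (b : ℝ) (p : Fin n → Fin k → ℝ)
    (i : Fin n) (r : Fin k) (y : Fin m → ℝ) : ℝ :=
  ∑ x ∈ Finset.univ.filter (fun x : Fin n → Fin k => x i = r),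
    (∏ i' ∈ Finset.univ.erase i, p i' (x i')) * lapDensity W b x y

lemma linQuery_update {n m k : ℕ} (W : Fin m → Fin k → ℝ) (x : Fin n → Fin k)
    (i : Fin n) (j : Fin k) (l : Fin m) :
    linQuery W (Function.update x i j) l = linQuery W x l + (W l j - W l (x i)) := by
  unfold linQuery
  have h : ∑ i', W l (Function.update x i j i') - ∑ i', W l (x i')
      = ∑ i', (W l (Function.update x i j i') - W l (x i')) := by
    rw [Finset.sum_sub_distrib]
  have h2 : ∑ i', (W l (Function.update x i j i') - W l (x i')) = W l j - W l (x i) := by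
    rw [Finset.sum_eq_single i]
    · simp
    · intro i' _ hne; rw [Function.update_of_ne hne]; ring
    · simp
  linarith [h, h2]

lemma lap_update_ge {n m k : ℕ} (W : Fin m → Fin k → ℝ) (b : ℝ) (hb : 0 < b)
    (x : Fin n → Fin k) (i : Fin n) (j r : Fin k) (hx : x i = r) (y : Fin m → ℝ) :
    lapDensity W b x y * Real.exp (-Δcol W b j r)
      ≤ lapDensity W b (Function.update x i j) y := by
  have hexp : Real.exp (-Δcol W b j r) = ∏ l, Real.exp (-|W l j - W l r| / b) := by
    rw [← Real.exp_sum]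
    congr 1
    rw [Δcol, ← Finset.sum_div, Finset.sum_neg_distrib, neg_div]
  rw [lapDensity, hexp, ← Finset.prod_mul_distrib, lapDensity]
  refine Finset.prod_le_prod (fun l _ => ?_) (fun l _ => ?_)
  · positivity
  · rw [mul_assoc, ← Real.exp_add]
    refine mul_le_mul_of_nonneg_left (Real.exp_le_exp.2 ?_) (by positivity)
    rw [linQuery_update, hx, ← add_div, div_le_div_iff_of_pos_right hb]
    have h3 : |y l - (linQuery W x l + (W l j - W l r))|
        ≤ |y l - linQuery W x l| + |W l j - W l r| := by
      rw [show y l - (linQuery W x l + (W l j - W l r))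
          = (y l - linQuery W x l) - (W l j - W l r) by ring]
      exact abs_sub _ _
    linarith


lemma fCond_key {n m k : ℕ} (W : Fin m → Fin k → ℝ) (b : ℝ) (hb : 0 < b)
    (p : Fin n → Fin k → ℝ) (hp : ∀ i' j', 0 ≤ p i' j')
    (i : Fin n) (r j : Fin k) (y : Fin m → ℝ) :
    fCond W b p i r y * Real.exp (-Δcol W b j r) ≤ fCond W b p i j y := by
  unfold fCond
  rw [Finset.sum_mul]
  have hre : ∑ x ∈ Finset.univ.filter (fun x : Fin n → Fin k => x i = j),
      (∏ i' ∈ Finset.univ.erase i, p i' (x i')) * lapDensity W b x y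
      = ∑ x ∈ Finset.univ.filter (fun x : Fin n → Fin k => x i = r),
      (∏ i' ∈ Finset.univ.erase i, p i' (Function.update x i j i'))
        * lapDensity W b (Function.update x i j) y := by
    refine Finset.sum_bij' (fun x _ => Function.update x i r)
      (fun x _ => Function.update x i j) ?_ ?_ ?_ ?_ ?_
    · intro x hx; simp
    · intro x hx; simp
    · intro x hx
      simp only [Finset.mem_filter, Finset.mem_univ, true_and] at hx
      simp [Function.update_idem, ← hx, Function.update_eq_self]
    · intro x hx
      simp only [Finset.mem_filter, Finset.mem_univ, true_and] at hx
      simp [Function.update_idem, ← hx, Function.update_eq_self]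
    · intro x hx
      simp only [Finset.mem_filter, Finset.mem_univ, true_and] at hx
      have h1 : Function.update (Function.update x i r) i j = x := by
        rw [Function.update_idem, ← hx, Function.update_eq_self]
      simp only [h1]
  rw [hre]
  refine Finset.sum_le_sum fun x hx => ?_
  simp only [Finset.mem_filter, Finset.mem_univ, true_and] at hx
  have hprior : ∏ i' ∈ Finset.univ.erase i, p i' (Function.update x i j i')
      = ∏ i' ∈ Finset.univ.erase i, p i' (x i') := by
    refine Finset.prod_congr rfl fun i' hi' => ?_
    rw [Function.update_of_ne (Finset.ne_of_mem_erase hi')]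
  rw [hprior, mul_assoc]
  refine mul_le_mul_of_nonneg_left ?_ (Finset.prod_nonneg fun i' _ => hp i' _)
  exact lap_update_ge W b hb x i j r hx y

lemma fY_decomp {n m k : ℕ} (W : Fin m → Fin k → ℝ) (b : ℝ)
    (p : Fin n → Fin k → ℝ) (i : Fin n) (y : Fin m → ℝ) :
    fY W b p y = ∑ j, p i j * fCond W b p i j y := by
  unfold fY fCond
  rw [← Finset.sum_fiberwise Finset.univ (fun x : Fin n → Fin k => x i)]
  refine Finset.sum_congr rfl fun j _ => ?_
  rw [Finset.mul_sum]
  refine Finset.sum_congr rfl fun x hx => ?_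
  simp only [Finset.mem_filter, Finset.mem_univ, true_and] at hx
  rw [← mul_assoc, ← hx, Finset.mul_prod_erase Finset.univ (fun i' => p i' (x i')) (Finset.mem_univ i)]

/-- Triangle-inequality step of the corollary proof: for every product prior with
classwise lower bound `α`, record `i`, class `r` and output `y`,
`f_{Y|D_i=r}(y) · (∑_j p_{i,j} exp(−Δ_{j,r})) ≤ f_Y(y)`. -/
theorem laplace_density_ratio_prior_bound
    (k n m : ℕ) (hk : 0 < k) (hn : 0 < n) (hm : 0 < m)
    (b : ℝ) (hb : 0 < b) (W : Fin m → Fin k → ℝ)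
    (α : ℝ) (hα : 0 < α) (hαk : α ≤ 1 / (k : ℝ))
    (p : Fin n → Fin k → ℝ)
    (hplb : ∀ i j, α ≤ p i j) (hpsum : ∀ i, ∑ j, p i j = 1)
    (i : Fin n) (r : Fin k) (y : Fin m → ℝ) :
    fCond W b p i r y * (∑ j, p i j * Real.exp (-Δcol W b j r)) ≤ fY W b p y := by
  have hp : ∀ i' j', 0 ≤ p i' j' := fun i' j' => le_trans hα.le (hplb i' j')
  rw [fY_decomp W b p i y, Finset.mul_sum]
  refine Finset.sum_le_sum fun j _ => ?_
  have h := fCond_key W b hb p hp i r j y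
  have := mul_le_mul_of_nonneg_left h (hp i j)
  nlinarith [this]

end
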